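/- Let R be a commutative ring with identity, M a finitely generated R-module, and U a multiplicatively closed subset of R. Then the set of strongly prime submodules of the U⁻¹R-module U⁻¹M equals {U⁻¹P | P is a strongly prime submodule of M and (P : M) ∩ U = ∅}. -/

import Mathlib

/-- A proper submodule `P` of `M` is *strongly prime* if whenever
`I_x^P • y ⊆ P` (where `I_x^P = (P + Rx : M)`), either `x ∈ P` or `y ∈ P`. -/
def Submodule.IsStronglyPrime {R M : Type*} [CommRing R] [AddCommGroup M] [Module R M]
    (P : Submodule R M) : Prop :=
  P ≠ ⊤ ∧ ∀ x y : M,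
    (∀ r : R, (∀ m : M, r • m ∈ P ⊔ Submodule.span R {x}) → r • y ∈ P) → x ∈ P ∨ y ∈ P

section Aux
open Submodule
variable {R M : Type*} [CommRing R] [AddCommGroup M] [Module R M] (U : Submonoid R)

lemma aux_exists_mk (z : LocalizedModule U M) :
    ∃ (m : M) (s : U), z = LocalizedModule.mk m s := by
  induction z using LocalizedModule.induction_on with
  | h m s => exact ⟨m, s, rfl⟩

lemma aux_mem_loc {N : Submodule R M} {m : M} {s : U} :
    LocalizedModule.mk m s ∈ N.localized U ↔ ∃ u : U, (u : R) • m ∈ N := by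
  rw [Submodule.mem_localized']
  constructor
  · rintro ⟨n, hn, t, ht⟩
    rw [← IsLocalizedModule.mk_eq_mk', LocalizedModule.mk_eq] at ht
    obtain ⟨u, hu⟩ := ht
    refine ⟨u * t, ?_⟩
    simp only [Submonoid.smul_def, ← mul_smul] at hu
    rw [Submonoid.coe_mul, ← hu, mul_smul]
    exact N.smul_mem _ (N.smul_mem _ hn)
  · rintro ⟨u, hu⟩
    refine ⟨(u : R) • m, hu, u * s, ?_⟩
    rw [← IsLocalizedModule.mk_eq_mk', ← Submonoid.smul_def]
    exact LocalizedModule.mk_cancel_common_left u s m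

lemma aux_loc_mono {N N' : Submodule R M} (h : N ≤ N') :
    N.localized U ≤ N'.localized U := by
  rintro _ ⟨m, hm, s, rfl⟩
  exact ⟨m, h hm, s, rfl⟩

lemma aux_loc_sup (N N' : Submodule R M) :
    (N ⊔ N').localized U = N.localized U ⊔ N'.localized U := by
  refine le_antisymm ?_ (sup_le (aux_loc_mono U le_sup_left) (aux_loc_mono U le_sup_right))
  rintro _ ⟨m, hm, s, rfl⟩
  obtain ⟨n, hn, n', hn', rfl⟩ := Submodule.mem_sup.mp hm
  rw [IsLocalizedModule.mk'_add]
  exact Submodule.add_mem _ (Submodule.mem_sup_left ⟨n, hn, s, rfl⟩)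
    (Submodule.mem_sup_right ⟨n', hn', s, rfl⟩)

lemma aux_loc_span (x : M) :
    (span R {x}).localized U = span (Localization U) {LocalizedModule.mk x 1} := by
  refine (Submodule.localized'_span _ _ _ _).trans ?_
  rw [Set.image_singleton, LocalizedModule.mkLinearMap_apply]

lemma aux_span_mk_eq (x : M) (s : U) :
    span (Localization U) {LocalizedModule.mk x s}
      = span (Localization U) {(LocalizedModule.mk x 1 : LocalizedModule U M)} := by
  have h1 : (LocalizedModule.mk x s : LocalizedModule U M)
      = Localization.mk 1 s • LocalizedModule.mk x 1 := by
    rw [LocalizedModule.mk_smul_mk, one_smul, mul_one]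
  have h2 : (LocalizedModule.mk x 1 : LocalizedModule U M)
      = (Localization.mk (s : R) 1 : Localization U) • LocalizedModule.mk x s := by
    rw [LocalizedModule.mk_smul_mk, one_mul, ← Submonoid.smul_def, LocalizedModule.mk_cancel]
  refine le_antisymm (Submodule.span_le.2 ?_) (Submodule.span_le.2 ?_) <;>
    simp only [Set.singleton_subset_iff, SetLike.mem_coe]
  · rw [h1]; exact Submodule.smul_mem _ _ (Submodule.mem_span_singleton_self _)
  · rw [h2]; exact Submodule.smul_mem _ _ (Submodule.mem_span_singleton_self _)

lemma aux_prime {P : Submodule R M} (hP : P.IsStronglyPrime)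
    {r : R} {z : M} (hz : r • z ∈ P) (hz' : z ∉ P) (m : M) : r • m ∈ P := by
  have key : ∀ s : R, (∀ m' : M, s • m' ∈ P ⊔ span R {z}) → s • (r • m) ∈ P := by
    intro s hs
    obtain ⟨p, hp, w, hw, hpw⟩ := Submodule.mem_sup.mp (hs m)
    obtain ⟨c, rfl⟩ := Submodule.mem_span_singleton.mp hw
    have h3 : s • (r • m) = r • p + c • (r • z) := by
      rw [smul_comm s r, ← hpw, smul_add, smul_comm r c]
    rw [h3]
    exact Submodule.add_mem _ (P.smul_mem r hp) (P.smul_mem c hz)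
  rcases hP.2 z (r • m) key with h | h
  · exact absurd h hz'
  · exact h

lemma aux_sat {P : Submodule R M} (hP : P.IsStronglyPrime)
    (hU : ∀ r : R, r ∈ U → ¬ (∀ m : M, r • m ∈ P)) {u : U} {z : M}
    (h : (u : R) • z ∈ P) : z ∈ P := by
  by_contra hz
  exact hU u u.2 (aux_prime hP h hz)

end Aux

lemma aux_loc_surj {R : Type*} [CommRing R] (U : Submonoid R) (ρ : Localization U) :
    ∃ (r : R) (s : U), ρ = Localization.mk r s :=
  Localization.induction_on ρ (fun y => ⟨y.1, y.2, rfl⟩)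


/-- For a finitely generated module `M`, the strongly prime submodules of `U⁻¹M` are exactly
the submodules `U⁻¹P` where `P` is a strongly prime submodule of `M` with `(P : M) ∩ U = ∅`. -/
theorem stronglyPrime_localized_eq_of_fg
    {R M : Type*} [CommRing R] [AddCommGroup M] [Module R M] [Module.Finite R M]
    (U : Submonoid R) :
    {Q : Submodule (Localization U) (LocalizedModule U M) | Q.IsStronglyPrime} =
      {Q : Submodule (Localization U) (LocalizedModule U M) |
        ∃ P : Submodule R M, P.IsStronglyPrime ∧
          (∀ r : R, r ∈ U → ¬ (∀ m : M, r • m ∈ P)) ∧ Q = P.localized U} := by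
  classical
  ext Q
  simp only [Set.mem_setOf_eq]
  constructor
  · intro hQ
    set P : Submodule R M :=
      (Q.restrictScalars R).comap (LocalizedModule.mkLinearMap U M) with hPdef
    have memP : ∀ x : M, x ∈ P ↔ LocalizedModule.mk x 1 ∈ Q := fun x => Iff.rfl
    have hQP : Q = P.localized U := by
      ext z
      obtain ⟨m, s, rfl⟩ := aux_exists_mk U z
      rw [aux_mem_loc]
      constructor
      · intro h
        refine ⟨1, ?_⟩
        have heq : (LocalizedModule.mk m 1 : LocalizedModule U M)
            = (Localization.mk (s : R) 1 : Localization U) • LocalizedModule.mk m s := by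
          rw [LocalizedModule.mk_smul_mk, one_mul, ← Submonoid.smul_def,
            LocalizedModule.mk_cancel]
        simp only [OneMemClass.coe_one, one_smul, memP, heq]
        exact Q.smul_mem _ h
      · rintro ⟨u, hu⟩
        rw [memP] at hu
        have heq : (LocalizedModule.mk m s : LocalizedModule U M)
            = (Localization.mk 1 (u * s) : Localization U)
                • LocalizedModule.mk ((u : R) • m) 1 := by
          rw [LocalizedModule.mk_smul_mk, one_smul, mul_one, ← Submonoid.smul_def]
          exact (LocalizedModule.mk_cancel_common_left u s m).symm
        rw [heq]
        exact Q.smul_mem _ hu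
    have hPne : P ≠ ⊤ := by
      intro h
      refine hQ.1 ?_
      rw [hQP, h]
      exact Submodule.localized'_top _ _ _
    have hdisj : ∀ r : R, r ∈ U → ¬ (∀ m : M, r • m ∈ P) := by
      intro r hr hall
      apply hQ.1
      rw [Submodule.eq_top_iff']
      intro z
      obtain ⟨m, s, rfl⟩ := aux_exists_mk U z
      have h1 : LocalizedModule.mk (r • m) 1 ∈ Q := (memP _).1 (hall m)
      have heq : (LocalizedModule.mk m s : LocalizedModule U M)
          = (Localization.mk 1 (s * ⟨r, hr⟩) : Localization U)
              • LocalizedModule.mk (r • m) 1 := by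
        rw [LocalizedModule.mk_smul_mk, one_smul, mul_one]
        exact (LocalizedModule.mk_cancel_common_right s ⟨r, hr⟩ m).symm
      rw [heq]
      exact Q.smul_mem _ h1
    have hsp : ∀ x y : M,
        (∀ r : R, (∀ m : M, r • m ∈ P ⊔ Submodule.span R {x}) → r • y ∈ P) →
          x ∈ P ∨ y ∈ P := by
      intro x y H
      have harg : ∀ ρ : Localization U,
          (∀ ζ : LocalizedModule U M,
            ρ • ζ ∈ Q ⊔ Submodule.span (Localization U) {LocalizedModule.mk x 1}) →
          ρ • LocalizedModule.mk y 1 ∈ Q := by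
        intro ρ hρ
        obtain ⟨r, s, rfl⟩ := aux_loc_surj U ρ
        rw [hQP] at hρ ⊢
        rw [← aux_loc_span, ← aux_loc_sup] at hρ
        obtain ⟨T, hT⟩ := Module.Finite.fg_top (R := R) (M := M)
        have hch : ∀ m : M, ∃ u : U, m ∈ T → (u : R) • (r • m) ∈ P ⊔ Submodule.span R {x} := by
          intro m
          by_cases hm : m ∈ T
          · have h2 := hρ (LocalizedModule.mk m 1)
            rw [LocalizedModule.mk_smul_mk, mul_one] at h2
            obtain ⟨u, hu⟩ := (aux_mem_loc U).1 h2
            exact ⟨u, fun _ => hu⟩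
          · exact ⟨1, fun h => absurd h hm⟩
        choose g hg using hch
        set u : U := ∏ m ∈ T, g m with hudef
        have key : ∀ m : M, ((u : R) * r) • m ∈ P ⊔ Submodule.span R {x} := by
          have hses : Submodule.span R (↑T : Set M) ≤
              (P ⊔ Submodule.span R {x}).comap (LinearMap.lsmul R M ((u : R) * r)) := by
            rw [Submodule.span_le]
            intro m' hm'
            have hmem : m' ∈ T := hm'
            simp only [SetLike.mem_coe, Submodule.mem_comap, LinearMap.lsmul_apply]
            have hscal : (u : R) * r
                = (↑(∏ a ∈ T.erase m', g a) : R) * ((g m' : R) * r) := by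
              rw [show u = g m' * ∏ a ∈ T.erase m', g a from
                (Finset.mul_prod_erase T g hmem).symm, Submonoid.coe_mul]
              ring
            rw [hscal, mul_smul, mul_smul]
            exact Submodule.smul_mem _ _ (hg m' hmem)
          intro m
          have hm : m ∈ Submodule.span R (↑T : Set M) := by
            rw [hT]; exact Submodule.mem_top
          simpa using hses hm
        have hry := H ((u : R) * r) key
        rw [memP] at hry
        rw [LocalizedModule.mk_smul_mk, mul_one]
        have heq : (LocalizedModule.mk (r • y) s : LocalizedModule U M)
            = (Localization.mk 1 (u * s) : Localization U)
                • LocalizedModule.mk (((u : R) * r) • y) 1 := by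
          rw [LocalizedModule.mk_smul_mk, one_smul, mul_one, mul_smul, ← Submonoid.smul_def]
          exact (LocalizedModule.mk_cancel_common_left u s (r • y)).symm
        rw [hQP] at hry
        rw [heq]
        exact Submodule.smul_mem _ _ hry
      rcases hQ.2 (LocalizedModule.mk x 1) (LocalizedModule.mk y 1) harg with h | h
      · exact Or.inl ((memP x).2 h)
      · exact Or.inr ((memP y).2 h)
    exact ⟨P, ⟨hPne, hsp⟩, hdisj, hQP⟩
  · rintro ⟨P, hP, hU, rfl⟩
    constructor
    · intro h
      apply hP.1
      rw [Submodule.eq_top_iff']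
      intro m
      have hm : LocalizedModule.mk m 1 ∈ P.localized U := by rw [h]; trivial
      obtain ⟨v, hv⟩ := (aux_mem_loc U).1 hm
      exact aux_sat U hP hU hv
    · intro ξ η H
      obtain ⟨x, s, rfl⟩ := aux_exists_mk U ξ
      obtain ⟨y, t, rfl⟩ := aux_exists_mk U η
      have hkey : ∀ r : R, (∀ m : M, r • m ∈ P ⊔ Submodule.span R {x}) → r • y ∈ P := by
        intro r hr
        have harg : ∀ ζ : LocalizedModule U M,
            (Localization.mk r 1 : Localization U) • ζ ∈
              P.localized U ⊔ Submodule.span (Localization U) {LocalizedModule.mk x s} := by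
          intro ζ
          obtain ⟨m, w, rfl⟩ := aux_exists_mk U ζ
          rw [aux_span_mk_eq, ← aux_loc_span, ← aux_loc_sup, LocalizedModule.mk_smul_mk,
            one_mul]
          exact (aux_mem_loc U).2 ⟨1, by simpa using hr m⟩
        have h1 := H (Localization.mk r 1) harg
        rw [LocalizedModule.mk_smul_mk, one_mul] at h1
        obtain ⟨v, hv⟩ := (aux_mem_loc U).1 h1
        exact aux_sat U hP hU hv
      rcases hP.2 x y hkey with h | h
      · exact Or.inl ((aux_mem_loc U).2 ⟨1, by simpa using h⟩)
      · exact Or.inr ((aux_mem_loc U).2 ⟨1, by simpa using h⟩)
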